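/- arXiv:1902.00244 — 4 statements merged into one kernel-verified Lean document; each statement's English description precedes it below -/
import Mathlib

section
/- For any functions A_1,...,A_5 from a sample space to {-1,+1} and any probability distribution, the sum of expectations ⟨A_1A_2⟩ + ⟨A_3A_2⟩ + ⟨A_3A_4⟩ + ⟨A_5A_4⟩ + ⟨A_5A_1⟩ ≥ -3. -/
open MeasureTheory

lemma kcbs_pointwise (a b c d e : ℝ)
    (ha : a = 1 ∨ a = -1) (hb : b = 1 ∨ b = -1) (hc : c = 1 ∨ c = -1)
    (hd : d = 1 ∨ d = -1) (he : e = 1 ∨ e = -1) :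
    -3 ≤ a * b + c * b + c * d + e * d + e * a := by
  rcases ha with h|h <;> rcases hb with h'|h' <;> rcases hc with h''|h'' <;>
    rcases hd with h3|h3 <;> rcases he with h4|h4 <;>
    simp [h, h', h'', h3, h4] <;> norm_num

/-- KCBS inequality for noncontextual hidden-variable models: five ±1-valued
observables on a probability space satisfy
⟨A₁A₂⟩ + ⟨A₃A₂⟩ + ⟨A₃A₄⟩ + ⟨A₅A₄⟩ + ⟨A₅A₁⟩ ≥ -3. -/
theorem kcbs_classical_bound {Ω : Type*} [MeasurableSpace Ω]
    (μ : Measure Ω) [IsProbabilityMeasure μ]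
    (A : Fin 5 → Ω → ℝ)
    (hA : ∀ i ω, A i ω = 1 ∨ A i ω = -1)
    (hint : ∀ i j, Integrable (fun ω => A i ω * A j ω) μ) :
    -3 ≤ (∫ ω, A 0 ω * A 1 ω ∂μ) + (∫ ω, A 2 ω * A 1 ω ∂μ)
        + (∫ ω, A 2 ω * A 3 ω ∂μ) + (∫ ω, A 4 ω * A 3 ω ∂μ)
        + (∫ ω, A 4 ω * A 0 ω ∂μ) := by
  have hsum : (∫ ω, A 0 ω * A 1 ω ∂μ) + (∫ ω, A 2 ω * A 1 ω ∂μ)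
        + (∫ ω, A 2 ω * A 3 ω ∂μ) + (∫ ω, A 4 ω * A 3 ω ∂μ)
        + (∫ ω, A 4 ω * A 0 ω ∂μ)
      = ∫ ω, (A 0 ω * A 1 ω + A 2 ω * A 1 ω + A 2 ω * A 3 ω
          + A 4 ω * A 3 ω + A 4 ω * A 0 ω) ∂μ := by
    have h2 : Integrable (fun ω => A 0 ω * A 1 ω + A 2 ω * A 1 ω) μ := (hint 0 1).add (hint 2 1)
    have h3 : Integrable (fun ω => A 0 ω * A 1 ω + A 2 ω * A 1 ω + A 2 ω * A 3 ω) μ := h2.add (hint 2 3)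
    have h4 : Integrable (fun ω => A 0 ω * A 1 ω + A 2 ω * A 1 ω + A 2 ω * A 3 ω + A 4 ω * A 3 ω) μ := h3.add (hint 4 3)
    rw [← integral_add (hint 0 1) (hint 2 1), ← integral_add h2 (hint 2 3),
        ← integral_add h3 (hint 4 3), ← integral_add h4 (hint 4 0)]
  rw [hsum]
  have : (-3 : ℝ) = ∫ _ω, (-3 : ℝ) ∂μ := by simp
  rw [this]
  apply integral_mono (integrable_const _)
    (((((hint 0 1).add (hint 2 1)).add (hint 2 3)).add (hint 4 3)).add (hint 4 0))
  intro ω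
  exact kcbs_pointwise _ _ _ _ _ (hA 0 ω) (hA 1 ω) (hA 2 ω) (hA 3 ω) (hA 4 ω)
end

section
/- Let A_1^1, A_1^2, A_2^1, A_2^2, A_3^1, A_3^2, A_4^1, A_4^2, A_5^1, A_5^2 be ±1-valued random variables on a common probability space, where superscripts denote the two players' outputs and players cannot communicate (i.e., each A_i^1 and A_j^2 are arbitrary ±1 random variables, with the local hidden variable structure: A_i^1 = f_i(λ) and A_j^2 = g_j(λ) for functions f_i, g_j and a shared variable λ). Then ⟨A_1^1A_2^2⟩ + ⟨A_3^1A_2^2⟩ + ⟨A_3^1A_4^2⟩ + ⟨A_5^1A_4^2⟩ + ⟨A_5^1A_1^2⟩ - ⟨A_1^1A_1^2⟩ ≥ -4. -/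
open MeasureTheory

/-- Modified KCBS inequality as a Bell inequality: in a local hidden-variable
model where the first player's outputs are f i (λ) ∈ {±1} and the second
player's outputs are g j (λ) ∈ {±1}, the modified KCBS expression is ≥ -4. -/
theorem modified_kcbs_bell_bound {Λ : Type*} [MeasurableSpace Λ]
    (μ : Measure Λ) [IsProbabilityMeasure μ]
    (f g : Fin 5 → Λ → ℝ)
    (hf : ∀ i lam, f i lam = 1 ∨ f i lam = -1)
    (hg : ∀ j lam, g j lam = 1 ∨ g j lam = -1)
    (hint : ∀ i j, Integrable (fun lam => f i lam * g j lam) μ) :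
    -4 ≤ (∫ lam, f 0 lam * g 1 lam ∂μ) + (∫ lam, f 2 lam * g 1 lam ∂μ)
        + (∫ lam, f 2 lam * g 3 lam ∂μ) + (∫ lam, f 4 lam * g 3 lam ∂μ)
        + (∫ lam, f 4 lam * g 0 lam ∂μ) - (∫ lam, f 0 lam * g 0 lam ∂μ) := by
  have h1 : Integrable (fun lam => f 0 lam * g 1 lam + f 2 lam * g 1 lam) μ :=
    (hint 0 1).add (hint 2 1)
  have h2 : Integrable (fun lam => f 0 lam * g 1 lam + f 2 lam * g 1 lam
      + f 2 lam * g 3 lam) μ := h1.add (hint 2 3)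
  have h3 : Integrable (fun lam => f 0 lam * g 1 lam + f 2 lam * g 1 lam
      + f 2 lam * g 3 lam + f 4 lam * g 3 lam) μ := h2.add (hint 4 3)
  have h4 : Integrable (fun lam => f 0 lam * g 1 lam + f 2 lam * g 1 lam
      + f 2 lam * g 3 lam + f 4 lam * g 3 lam + f 4 lam * g 0 lam) μ :=
    h3.add (hint 4 0)
  have hint' : Integrable (fun lam => f 0 lam * g 1 lam + f 2 lam * g 1 lam
      + f 2 lam * g 3 lam + f 4 lam * g 3 lam + f 4 lam * g 0 lam
      - f 0 lam * g 0 lam) μ := h4.sub (hint 0 0)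
  have key : (-4 : ℝ) ≤ ∫ lam, (f 0 lam * g 1 lam + f 2 lam * g 1 lam
      + f 2 lam * g 3 lam + f 4 lam * g 3 lam + f 4 lam * g 0 lam
      - f 0 lam * g 0 lam) ∂μ := by
    have h := integral_mono (integrable_const (-4 : ℝ)) hint' ?_
    · simpa using h
    · intro lam
      rcases hf 0 lam with h0 | h0 <;> rcases hf 2 lam with h2 | h2 <;>
        rcases hf 4 lam with h4 | h4 <;> rcases hg 0 lam with k0 | k0 <;>
        rcases hg 1 lam with k1 | k1 <;> rcases hg 3 lam with k3 | k3 <;>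
        simp [h0, h2, h4, k0, k1, k3] <;> norm_num
  calc (-4 : ℝ) ≤ _ := key
    _ = _ := by
      rw [integral_sub h4 (hint 0 0), integral_add h3 (hint 4 0),
        integral_add h2 (hint 4 3), integral_add h1 (hint 2 3),
        integral_add (hint 0 1) (hint 2 1)]
end

section
/- In a 3-dimensional complex Hilbert space, if |v_1⟩,...,|v_5⟩ are the unit vectors of a regular pentagram (with ⟨v_i|v_{i+1}⟩ = 0, indices mod 5) and |ψ⟩ is the symmetric-axis state with |⟨v_i|ψ⟩|² = cos(π/5)/(1+cos(π/5)) for each i, then for observables A_i = 1 - 2|v_i⟩⟨v_i| the quantum value Σ_{i=1}^{5} ⟨ψ|A_iA_{i+1}|ψ⟩ equals 5 - 4√5 ≈ -3.944, violating the classical bound of -3. -/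
open scoped ComplexOrder

noncomputable section

/-- Rank-one (outer product) operator |v⟩⟨v| on a complex inner product space. -/
noncomputable def outerProj {E : Type*} [NormedAddCommGroup E] [InnerProductSpace ℂ E]
    (v : E) : E →ₗ[ℂ] E where
  toFun x := (inner ℂ v x : ℂ) • v
  map_add' x y := by simp [inner_add_right, add_smul]
  map_smul' c x := by simp [inner_smul_right, smul_smul]

/-- KCBS observable A = 1 - 2|v⟩⟨v|. -/
noncomputable def kcbsObs {E : Type*} [NormedAddCommGroup E] [InnerProductSpace ℂ E]
    (v : E) : E →ₗ[ℂ] E :=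
  LinearMap.id - (2 : ℂ) • outerProj v

/-- Quantum value of the KCBS pentagram configuration in dimension 3:
with unit vectors v i, ⟨v i , v (i+1)⟩ = 0, and a state ψ with
|⟨v i, ψ⟩|² = cos(π/5)/(1+cos(π/5)) for each i, the sum of the five
correlations ⟨ψ| A_i A_{i+1} |ψ⟩ equals 5 - 4√5 < -3. -/
theorem kcbs_quantum_value
    (v : Fin 5 → EuclideanSpace ℂ (Fin 3)) (ψ : EuclideanSpace ℂ (Fin 3))
    (hv : ∀ i, ‖v i‖ = 1) (hψ : ‖ψ‖ = 1)
    (horth : ∀ i : Fin 5, (inner ℂ (v i) (v (i + 1)) : ℂ) = 0)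
    (hp : ∀ i : Fin 5, ‖(inner ℂ (v i) ψ : ℂ)‖ ^ 2
        = Real.cos (Real.pi / 5) / (1 + Real.cos (Real.pi / 5))) :
    (∑ i : Fin 5, (inner ℂ ψ ((kcbsObs (v i)) ((kcbsObs (v (i + 1))) ψ)) : ℂ))
      = ((5 - 4 * Real.sqrt 5 : ℝ) : ℂ)
    ∧ (5 - 4 * Real.sqrt 5 : ℝ) < -3 := by
  have hs2 : Real.sqrt 5 ^ 2 = 5 := Real.sq_sqrt (by norm_num)
  have hsp : (0:ℝ) < Real.sqrt 5 := Real.sqrt_pos.mpr (by norm_num)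
  have h5 : Real.cos (Real.pi/5) / (1 + Real.cos (Real.pi/5)) = Real.sqrt 5 / 5 := by
    rw [Real.cos_pi_div_five]
    rw [div_eq_div_iff (by nlinarith) (by norm_num)]
    nlinarith
  have hp' : ∀ i : Fin 5, (inner ℂ ψ (v i) : ℂ) * inner ℂ (v i) ψ = ((Real.sqrt 5 / 5 : ℝ) : ℂ) := by
    intro i
    rw [← inner_conj_symm (v i) ψ]
    have := hp i
    rw [h5] at this
    rw [← this, Complex.mul_conj]
    norm_cast
    rw [Complex.normSq_eq_norm_sq, ← inner_conj_symm ψ (v i),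
      RCLike.norm_conj]
  have hψψ : (inner ℂ ψ ψ : ℂ) = 1 := by
    rw [inner_self_eq_norm_sq_to_K, hψ]; norm_num
  have key : ∀ i : Fin 5, (inner ℂ ψ ((kcbsObs (v i)) ((kcbsObs (v (i + 1))) ψ)) : ℂ)
      = 1 - 4 * ((Real.sqrt 5 / 5 : ℝ) : ℂ) := by
    intro i
    simp only [kcbsObs, outerProj, LinearMap.sub_apply, LinearMap.smul_apply,
      LinearMap.id_apply, LinearMap.coe_mk, AddHom.coe_mk, inner_sub_right,
      inner_smul_right, inner_sub_left, smul_smul, inner_smul_left]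
    simp only [inner_sub_right, inner_smul_right, horth i, hψψ, smul_eq_mul]
    linear_combination (-2:ℂ) * hp' i + (-2:ℂ) * hp' (i+1)
  rw [Finset.sum_congr rfl (fun i _ => key i)]
  constructor
  · simp only [Finset.sum_const, Finset.card_univ, Fintype.card_fin, nsmul_eq_mul]
    push_cast
    ring
  · nlinarith
end
end

section
/- For any discrete probability distribution p over the 11 inputs of the KCBS game and ±1-valued deterministic assignments, the maximal score of the KCBS game g = -(1/6)(a_1a_2 + a_3a_2 + a_3a_4 + a_5a_4 + a_5a_1 - a_1a_1') achievable by deterministic strategies with consistent values (a_1' = a_1, all a_i ∈ {-1,+1}) is exactly 2/3, while the quantum value (4√5 - 4)/6 ≈ 0.824 strictly exceeds it. -/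
/-- The maximal KCBS game score achievable by deterministic ±1 strategies
(with consistent value for the repeated observable A₁) is exactly 2/3, and the
quantum value (4√5 - 4)/6 strictly exceeds it. -/
theorem kcbs_game_classical_value :
    IsGreatest {g : ℝ | ∃ a : Fin 5 → ℝ, (∀ i, a i = 1 ∨ a i = -1) ∧
        g = -(1 / 6) * (a 0 * a 1 + a 2 * a 1 + a 2 * a 3 + a 4 * a 3
          + a 4 * a 0 - a 0 * a 0)} (2 / 3)
    ∧ (2 / 3 : ℝ) < (4 * Real.sqrt 5 - 4) / 6 := by
  refine ⟨⟨⟨![1, -1, 1, -1, 1], ?_, by simp [Matrix.cons_val_two, Matrix.cons_val_three, Matrix.cons_val_four]; norm_num⟩, ?_⟩, ?_⟩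
  · intro i; fin_cases i <;> simp
  · rintro g ⟨a, ha, rfl⟩
    rcases ha 0 with h0 | h0 <;> rcases ha 1 with h1 | h1 <;>
      rcases ha 2 with h2 | h2 <;> rcases ha 3 with h3 | h3 <;>
      rcases ha 4 with h4 | h4 <;> rw [h0, h1, h2, h3, h4] <;> norm_num
  · have h : (2 : ℝ) < Real.sqrt 5 := by
      rw [show (2:ℝ) = Real.sqrt 4 by rw [show (4:ℝ) = 2^2 by norm_num, Real.sqrt_sq] ; norm_num]
      exact Real.sqrt_lt_sqrt (by norm_num) (by norm_num)
    linarith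
end
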